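/- Minimax inequality (Equation (dum3) in the proof of Lemma 4.1): Let Ω0 ⊆ ℝ^p be a nonempty convex set, let v ∈ ℝ^p, and let U ∈ ℝ^{p×k} satisfy UᵀU = I_k. Then inf_{θ∈Ω0} ‖Uᵀ(θ − v)‖_∞ ≤ sup_{u∈ℝ^p, ‖u‖₂≤1} inf_{θ∈Ω0} uᵀ(θ − v). -/

import Mathlib

open Matrix
open scoped Classical

noncomputable section

/-- ℓ∞ norm of a finite vector. -/
def linf {m : ℕ} (v : Fin m → ℝ) : ℝ := ⨆ i, |v i|

/-- ℓ2 norm of a finite vector. -/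
def l2 {m : ℕ} (v : Fin m → ℝ) : ℝ := Real.sqrt (∑ i, (v i) ^ 2)

/-- view a plain vector as an element of Euclidean space -/
def toE {p : ℕ} (x : Fin p → ℝ) : EuclideanSpace ℝ (Fin p) := (WithLp.equiv 2 _).symm x

lemma l2_eq {p : ℕ} (x : Fin p → ℝ) : l2 x = ‖toE x‖ := by
  simp [l2, toE, EuclideanSpace.norm_eq, Real.norm_eq_abs, sq_abs]

lemma l2_nonneg {p : ℕ} (x : Fin p → ℝ) : 0 ≤ l2 x := Real.sqrt_nonneg _

lemma inner_toE {p : ℕ} (x y : Fin p → ℝ) :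
    (inner ℝ (toE x) (toE y) : ℝ) = ∑ i, x i * y i := by
  simp [toE, PiLp.inner_apply, RCLike.inner_apply, conj_trivial, mul_comm]

lemma toE_sub {p : ℕ} (x y : Fin p → ℝ) : toE (x - y) = toE x - toE y := rfl

lemma abs_sum_mul_le {p : ℕ} (x y : Fin p → ℝ) :
    |∑ i, x i * y i| ≤ l2 x * l2 y := by
  rw [l2_eq, l2_eq, ← inner_toE]
  exact abs_real_inner_le_norm _ _

lemma linf_mulVec_le {p k : ℕ} (U : Matrix (Fin p) (Fin k) ℝ) (hU : Uᵀ * U = 1)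
    (x : Fin p → ℝ) : linf (Uᵀ *ᵥ x) ≤ l2 x := by
  apply Real.iSup_le _ (l2_nonneg x)
  intro i
  have hcol : l2 (fun j => U j i) = 1 := by
    have h1 : (Uᵀ * U) i i = (1 : Matrix (Fin k) (Fin k) ℝ) i i := by rw [hU]
    simp only [Matrix.mul_apply, Matrix.transpose_apply, Matrix.one_apply_eq] at h1
    have : ∑ j, (U j i) ^ 2 = 1 := by
      rw [← h1]; congr 1; ext j; ring
    simp [l2, this]
  have hval : (Uᵀ *ᵥ x) i = ∑ j, (fun j => U j i) j * x j := by
    simp [Matrix.mulVec, Matrix.transpose_apply, dotProduct]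
  calc |(Uᵀ *ᵥ x) i| = |∑ j, (fun j => U j i) j * x j| := by rw [hval]
    _ ≤ l2 (fun j => U j i) * l2 x := abs_sum_mul_le _ _
    _ = l2 x := by rw [hcol, one_mul]

lemma linf_nonneg {m : ℕ} (v : Fin m → ℝ) : 0 ≤ linf v :=
  Real.iSup_nonneg fun i => abs_nonneg _

/-- Minimax inequality: for nonempty convex `Ω0` and `U` with orthonormal columns,
`inf_{θ∈Ω0} ‖Uᵀ(θ−v)‖_∞ ≤ sup_{‖u‖₂≤1} inf_{θ∈Ω0} uᵀ(θ−v)`. -/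
theorem minimax_dum3 (p k : ℕ) (Ω0 : Set (Fin p → ℝ)) (hne : Ω0.Nonempty)
    (hconv : Convex ℝ Ω0) (v : Fin p → ℝ)
    (U : Matrix (Fin p) (Fin k) ℝ) (hU : Uᵀ * U = 1) :
    sInf {s : ℝ | ∃ θ ∈ Ω0, s = linf (Uᵀ *ᵥ (θ - v))}
      ≤ sSup {s : ℝ | ∃ u : Fin p → ℝ, l2 u ≤ 1 ∧
          s = sInf {r : ℝ | ∃ θ ∈ Ω0, r = ∑ i, u i * (θ i - v i)}} := by
  obtain ⟨θ0, hθ0⟩ := hne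
  set S := {s : ℝ | ∃ θ ∈ Ω0, s = linf (Uᵀ *ᵥ (θ - v))} with hS
  set T := {s : ℝ | ∃ u : Fin p → ℝ, l2 u ≤ 1 ∧
      s = sInf {r : ℝ | ∃ θ ∈ Ω0, r = ∑ i, u i * (θ i - v i)}} with hT
  -- T is bounded above
  have hTbdd : BddAbove T := by
    refine ⟨l2 (θ0 - v), ?_⟩
    rintro t ⟨u, hu, rfl⟩
    set R := {r : ℝ | ∃ θ ∈ Ω0, r = ∑ i, u i * (θ i - v i)} with hR
    by_cases hb : BddBelow R
    · have hmem : (∑ i, u i * (θ0 i - v i)) ∈ R := ⟨θ0, hθ0, rfl⟩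
      have h1 : sInf R ≤ ∑ i, u i * (θ0 i - v i) := csInf_le hb hmem
      have h2 : ∑ i, u i * (θ0 i - v i) ≤ l2 u * l2 (θ0 - v) := by
        have := abs_sum_mul_le u (θ0 - v)
        have heq : ∑ i, u i * (θ0 - v) i = ∑ i, u i * (θ0 i - v i) := rfl
        rw [heq] at this
        exact le_trans (le_abs_self _) this
      have h3 : l2 u * l2 (θ0 - v) ≤ 1 * l2 (θ0 - v) :=
        mul_le_mul_of_nonneg_right hu (l2_nonneg _)
      linarith
    · rw [Real.sInf_of_not_bddBelow hb]
      exact l2_nonneg _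
  -- S is bounded below and nonempty
  have hSbdd : BddBelow S := by
    refine ⟨0, ?_⟩
    rintro s ⟨θ, hθ, rfl⟩
    exact linf_nonneg _
  -- projection
  set K := closure (toE '' Ω0) with hK
  have hKconv : Convex ℝ K := by
    have himg : toE '' Ω0 = ((WithLp.linearEquiv 2 ℝ (Fin p → ℝ)).symm.toLinearMap) '' Ω0 := rfl
    exact (himg ▸ hconv.linear_image _).closure
  have hKne : K.Nonempty := (Set.Nonempty.image toE ⟨θ0, hθ0⟩).closure
  have hKcomp : IsComplete K := isClosed_closure.isComplete
  obtain ⟨θs, hθsK, hmin⟩ := exists_norm_eq_iInf_of_complete_convex hKne hKcomp hKconv (toE v)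
  have hproj : ∀ w ∈ K, (inner ℝ (toE v - θs) (w - θs) : ℝ) ≤ 0 :=
    (norm_eq_iInf_iff_real_inner_le_zero hKconv hθsK).1 hmin
  set d := ‖θs - toE v‖ with hd
  have hd0 : 0 ≤ d := norm_nonneg _
  -- Step 1 : sInf S ≤ d
  have hstep1 : sInf S ≤ d := by
    apply le_of_forall_pos_le_add
    intro ε hε
    obtain ⟨y, hy, hdist⟩ := Metric.mem_closure_iff.1 hθsK ε hε
    obtain ⟨θ, hθ, rfl⟩ := hy
    have h1 : sInf S ≤ linf (Uᵀ *ᵥ (θ - v)) := csInf_le hSbdd ⟨θ, hθ, rfl⟩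
    have h2 : linf (Uᵀ *ᵥ (θ - v)) ≤ l2 (θ - v) := linf_mulVec_le U hU _
    have h3 : l2 (θ - v) ≤ ε + d := by
      rw [l2_eq, toE_sub]
      calc ‖toE θ - toE v‖ ≤ ‖toE θ - θs‖ + ‖θs - toE v‖ := norm_sub_le_norm_sub_add_norm_sub _ _ _
        _ ≤ ε + d := by
            have : ‖toE θ - θs‖ = dist θs (toE θ) := by rw [dist_eq_norm, norm_sub_rev]
            rw [this]; exact add_le_add (le_of_lt hdist) le_rfl
    linarith
  -- Step 2 : ∃ t ∈ T, d ≤ t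
  have hstep2 : ∃ t ∈ T, d ≤ t := by
    by_cases hvs : θs = toE v
    · -- d = 0, take u = 0
      have hd_eq : d = 0 := by rw [hd, hvs, sub_self, norm_zero]
      refine ⟨0, ⟨0, ?_, ?_⟩, by rw [hd_eq]⟩
      · simp [l2]
      · have : {r : ℝ | ∃ θ ∈ Ω0, r = ∑ i, (0:Fin p → ℝ) i * (θ i - v i)} = {0} := by
          ext r
          constructor
          · rintro ⟨θ, hθ, rfl⟩; simp
          · rintro rfl; exact ⟨θ0, hθ0, by simp⟩
        rw [this, csInf_singleton]
    · have hdpos : 0 < d := by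
        rw [hd]
        exact norm_pos_iff.2 (sub_ne_zero.2 hvs)
      set b : Fin p → ℝ := fun i => θs i - v i with hb
      have htEb : toE b = θs - toE v := rfl
      set u : Fin p → ℝ := d⁻¹ • b with hu
      have htEu : toE u = d⁻¹ • (θs - toE v) := rfl
      have hunorm : l2 u = 1 := by
        rw [l2_eq, htEu, norm_smul, Real.norm_eq_abs, abs_inv, abs_of_pos hdpos, ← hd]
        exact inv_mul_cancel₀ (ne_of_gt hdpos)
      refine ⟨_, ⟨u, le_of_eq hunorm, rfl⟩, ?_⟩
      refine le_csInf ⟨_, ⟨θ0, hθ0, rfl⟩⟩ ?_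
      rintro r ⟨θ, hθ, rfl⟩
      have hkey : ∑ i, u i * (θ i - v i) = (inner ℝ (toE u) (toE (θ - v)) : ℝ) := by
        rw [inner_toE]; simp [Pi.sub_apply]
      rw [hkey, htEu, toE_sub, real_inner_smul_left]
      have hsplit : toE θ - toE v = (toE θ - θs) + (θs - toE v) := by abel
      rw [hsplit, inner_add_right]
      have hA : (0:ℝ) ≤ inner ℝ (θs - toE v) (toE θ - θs) := by
        have hmem : toE θ ∈ K := subset_closure ⟨θ, hθ, rfl⟩
        have := hproj (toE θ) hmem
        have hneg : (inner ℝ (θs - toE v) (toE θ - θs) : ℝ)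
            = -(inner ℝ (toE v - θs) (toE θ - θs) : ℝ) := by
          rw [← inner_neg_left]; congr 1; abel
        rw [hneg]; linarith
      have hB : (inner ℝ (θs - toE v) (θs - toE v) : ℝ) = d ^ 2 := by
        rw [real_inner_self_eq_norm_sq]
      rw [hB]
      have h1 : d⁻¹ * d ^ 2 = d := by field_simp
      nlinarith [mul_nonneg (le_of_lt (inv_pos.2 hdpos)) hA]
  obtain ⟨t, htT, hdt⟩ := hstep2
  calc sInf S ≤ d := hstep1
    _ ≤ t := hdt
    _ ≤ sSup T := le_csSup hTbdd htT

end
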